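/- Let δ, λ be reals with λ ≥ 1 and (λ/(λ+1))^2 < δ ≤ 1, and let N be the unique positive integer with N - 1 ≤ 1/(√δ·(λ+1)/λ - 1) < N. If a real number α satisfies α ≥ √δ·(λ+1)/(2λ), then for every integer m ≥ 1, (2(m-1)+1)·α - 1 > m - 3/2 + (2(m-1)+1)/(2N). -/

import Mathlib

theorem stmt_6 (δ l : ℝ) (hl : 1 ≤ l) (hδ1 : (l / (l + 1)) ^ 2 < δ) (hδ2 : δ ≤ 1)
    (N : ℕ) (hN : 0 < N)
    (hN1 : (N : ℝ) - 1 ≤ 1 / (Real.sqrt δ * (l + 1) / l - 1))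
    (hN2 : 1 / (Real.sqrt δ * (l + 1) / l - 1) < N)
    (α : ℝ) (hα : α ≥ Real.sqrt δ * (l + 1) / (2 * l))
    (m : ℕ) (hm : 1 ≤ m) :
    (2 * ((m : ℝ) - 1) + 1) * α - 1
      > (m : ℝ) - 3 / 2 + (2 * ((m : ℝ) - 1) + 1) / (2 * N) := by
  have hl0 : (0:ℝ) < l := by linarith
  have hl1 : (0:ℝ) < l + 1 := by linarith
  have hq0 : (0:ℝ) < l / (l + 1) := div_pos hl0 hl1
  -- √δ > l/(l+1)
  have hsd : l / (l + 1) < Real.sqrt δ := by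
    have hδ0 : 0 < δ := lt_of_le_of_lt (by positivity) hδ1
    have := Real.lt_sqrt hq0.le (y := δ)
    exact this.mpr hδ1
  set s : ℝ := Real.sqrt δ * (l + 1) / l with hs
  have hs1 : 1 < s := by
    rw [hs, lt_div_iff₀ hl0]
    have : l / (l + 1) * (l + 1) < Real.sqrt δ * (l + 1) :=
      (mul_lt_mul_iff_left₀ hl1).mpr hsd
    rw [div_mul_cancel₀ _ (ne_of_gt hl1)] at this
    linarith
  have hN0 : (0:ℝ) < N := by exact_mod_cast hN
  have hkey : 1 < (N : ℝ) * (s - 1) := by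
    rw [div_lt_iff₀ (by linarith : (0:ℝ) < s - 1)] at hN2
    linarith
  -- α > 1/2 + 1/(2N)
  have hα2 : α ≥ s / 2 := by
    rw [hs]
    have : Real.sqrt δ * (l + 1) / (2 * l) = (Real.sqrt δ * (l + 1) / l) / 2 := by
      ring
    linarith [hα, this ▸ hα]
  have hαgt : α > 1 / 2 + 1 / (2 * N) := by
    have hs' : s > 1 + 1 / N := by
      rw [gt_iff_lt, ← sub_pos]
      have : s - (1 + 1 / N) = ((N : ℝ) * (s - 1) - 1) / N := by
        field_simp; ring
      rw [this]
      exact div_pos (by linarith) hN0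
    have : 1 / (2 * (N:ℝ)) = (1 / N) / 2 := by ring
    rw [this]
    linarith
  have hm1 : (1:ℝ) ≤ (m:ℝ) := by exact_mod_cast hm
  have hk : (1:ℝ) ≤ 2 * ((m : ℝ) - 1) + 1 := by linarith
  have hrhs : ((m : ℝ) - 3 / 2 + (2 * ((m : ℝ) - 1) + 1) / (2 * N))
      = (2 * ((m : ℝ) - 1) + 1) * (1 / 2 + 1 / (2 * N)) - 1 := by
    field_simp; ring
  rw [hrhs]
  have h := (mul_lt_mul_iff_right₀ (by linarith : (0:ℝ) < 2 * ((m : ℝ) - 1) + 1)).mpr hαgt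
  linarith
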